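/- Let u : [0,∞) → X be continuous, X a complex Banach space, with ‖u(t)‖ ≤ C e^{-δ t} for constants C, δ > 0. If all even moments ∫₀^∞ t^{2k} u(t) dt (k ≥ 0) vanish, then u ≡ 0 on [0,∞). -/

import Mathlib

open MeasureTheory Set
open scoped Nat FourierTransform

lemma evenInt {g : ℝ → ℝ} (hg : IntegrableOn g (Ioi 0)) :
    Integrable (fun t : ℝ => g |t|) := by
  have h1 : IntegrableOn (fun t : ℝ => g |t|) (Ioi 0) :=
    hg.congr_fun (fun x hx => by simp [abs_of_pos (show (0:ℝ) < x from hx)]) measurableSet_Ioi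
  have h2 : IntegrableOn (fun t : ℝ => g |t|) (Iio 0) := by
    have h := (MeasurePreserving.integrableOn_comp_preimage
      (Measure.measurePreserving_neg (volume : Measure ℝ))
      (Homeomorph.neg ℝ).measurableEmbedding).2 hg
    have hpre : (Neg.neg ⁻¹' (Ioi (0:ℝ))) = Iio 0 := by ext x; simp
    rw [hpre] at h
    exact h.congr_fun (fun x hx => by
      simp [Function.comp, abs_of_neg (show x < (0:ℝ) from hx)]) measurableSet_Iio
  have h3 : IntegrableOn (fun t : ℝ => g |t|) {(0:ℝ)} := by
    rw [IntegrableOn, Measure.restrict_eq_zero.mpr (by simp)]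
    exact integrable_zero_measure
  rw [← integrableOn_univ, show (univ : Set ℝ) = Iio 0 ∪ ({0} ∪ Ioi 0) by
    ext x; rcases lt_trichotomy x 0 with h|h|h <;> simp [h]]
  exact h2.union (h3.union h1)

lemma IoiInt {δ : ℝ} (hδ : 0 < δ) (n : ℕ) :
    IntegrableOn (fun t : ℝ => t ^ n * Real.exp (-(δ * t))) (Ioi 0) := by
  have h := integrableOn_rpow_mul_exp_neg_mul_rpow
    (s := (n:ℝ)) (p := 1) (lt_of_lt_of_le neg_one_lt_zero (Nat.cast_nonneg n)) one_pos hδ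
  exact h.congr_fun (fun x hx => by
    dsimp only; rw [Real.rpow_natCast, Real.rpow_one, neg_mul]) measurableSet_Ioi

lemma IoiVal {δ : ℝ} (hδ : 0 < δ) (n : ℕ) :
    ∫ t in Ioi (0:ℝ), t ^ n * Real.exp (-(δ * t)) = (n ! : ℝ) / δ ^ (n + 1) := by
  have h := Real.integral_rpow_mul_exp_neg_mul_Ioi (a := (n:ℝ) + 1) (r := δ) (by positivity) hδ
  rw [show ∫ t in Ioi (0:ℝ), t ^ n * Real.exp (-(δ * t))
      = ∫ t in Ioi (0:ℝ), t ^ ((n:ℝ) + 1 - 1) * Real.exp (-(δ * t)) from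
    setIntegral_congr_fun measurableSet_Ioi (fun x hx => by
      rw [add_sub_cancel_right, Real.rpow_natCast]), h,
    Real.Gamma_nat_eq_factorial, show ((n:ℝ) + 1) = ((n + 1 : ℕ) : ℝ) by push_cast; ring,
    Real.rpow_natCast]
  rw [one_div, inv_pow, inv_mul_eq_div]

set_option maxHeartbeats 2000000 in
lemma key {X : Type*} [NormedAddCommGroup X] [NormedSpace ℂ X] [CompleteSpace X]
    (w : ℝ → X) (C δ : ℝ) (hC : 0 < C) (hδ : 0 < δ)
    (hw : Continuous w)
    (hb : ∀ t : ℝ, ‖w t‖ ≤ C * Real.exp (-(δ * |t|)))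
    (hm : ∀ n : ℕ, (∫ t : ℝ, ((t : ℂ) ^ n) • w t) = 0) :
    ∀ t : ℝ, w t = 0 := by
  -- the exponential weight functions
  set f : ℕ → ℝ → ℝ := fun n t => C * (|t| ^ n * Real.exp (-(δ * |t|))) with hf
  have fInt : ∀ n, Integrable (f n) := by
    intro n
    exact evenInt (g := fun s => C * (s ^ n * Real.exp (-(δ * s))))
      ((IoiInt hδ n).const_mul C)
  set B : ℕ → ℝ := fun n => C * (2 * ((n ! : ℝ) / δ ^ (n + 1))) with hB
  have fVal : ∀ n, (∫ t : ℝ, f n t) = B n := by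
    intro n
    have h1 : (∫ t : ℝ, f n t)
        = 2 * ∫ t in Ioi (0:ℝ), C * (t ^ n * Real.exp (-(δ * t))) :=
      integral_comp_abs (f := fun s => C * (s ^ n * Real.exp (-(δ * s))))
    rw [h1, integral_const_mul, IoiVal hδ n, hB]
    ring
  -- the twisted integrands
  set E : ℝ → ℝ → ℂ := fun a t => Complex.exp (-(↑(a * t)) * Complex.I) with hE
  have habs : ∀ a t : ℝ, ‖E a t‖ = 1 := by
    intro a t
    rw [hE]
    simp [Complex.norm_exp]
  set F : ℝ → ℕ → ℝ → X := fun a n t => (E a t * (t : ℂ) ^ n) • w t with hF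
  have hFnorm : ∀ a n t, ‖F a n t‖ ≤ f n t := by
    intro a n t
    have h1 : ‖F a n t‖ = |t| ^ n * ‖w t‖ := by
      rw [hF]
      simp [norm_smul, map_mul, map_pow, habs a t, Complex.norm_real,
        abs_pow]
    rw [h1, hf]
    exact (mul_le_mul_of_nonneg_left (hb t) (by positivity)).trans_eq (by ring)
  have hFcont : ∀ a n, Continuous (F a n) := by
    intro a n
    apply Continuous.smul _ hw
    exact (Complex.continuous_exp.comp (by fun_prop)).mul (by fun_prop)
  have hFint : ∀ a n, Integrable (F a n) :=
    fun a n => Integrable.mono' (fInt n) (hFcont a n).aestronglyMeasurable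
      (ae_of_all _ (hFnorm a n))
  have hFnormInt : ∀ a n, (∫ t : ℝ, ‖F a n t‖) ≤ B n := by
    intro a n
    calc (∫ t : ℝ, ‖F a n t‖) ≤ ∫ t : ℝ, f n t :=
          integral_mono (hFint a n).norm (fInt n) (hFnorm a n)
      _ = B n := fVal n
  set M : ℝ → ℕ → X := fun a n => ∫ t : ℝ, F a n t with hM
  have hM0 : ∀ n, M 0 n = 0 := by
    intro n
    have h1 : ∀ t : ℝ, F 0 n t = ((t : ℂ) ^ n) • w t := by
      intro t; rw [hF]; simp [hE]
    calc M 0 n = ∫ t : ℝ, ((t : ℂ) ^ n) • w t := by rw [hM]; exact integral_congr_ae (ae_of_all _ h1)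
      _ = 0 := hm n
  have hstep : ∀ a h : ℝ, |h| ≤ δ / 3 → (∀ n, M a n = 0) → ∀ m, M (a + h) m = 0 := by
    intro a h hh h0 m
    set c : ℕ → ℂ := fun n => ((-h : ℂ) * Complex.I) ^ n / n ! with hc
    set G : ℕ → ℝ → X := fun n t => ((↑(-(h * t)) * Complex.I) ^ n / n !) • F a m t with hG
    have hGeq : ∀ n, G n = fun t => c n • F a (n + m) t := by
      intro n; funext t
      show ((↑(-(h * t)) * Complex.I) ^ n / (n ! : ℂ)) • ((E a t * (t : ℂ) ^ m) • w t)
        = c n • ((E a t * (t : ℂ) ^ (n + m)) • w t)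
      rw [smul_smul, smul_smul, show c n = (-(h : ℂ) * Complex.I) ^ n / (n ! : ℂ) from rfl]
      congr 1
      push_cast
      ring
    have hGint : ∀ n, Integrable (G n) := by
      intro n; rw [hGeq n]; exact (hFint a (n + m)).smul (c n)
    have hcnorm : ∀ n, ‖c n‖ = |h| ^ n / n ! := by
      intro n
      rw [hc]
      simp [map_div₀, map_pow, map_mul, Complex.norm_real,
        Complex.norm_I, Complex.norm_natCast, abs_neg]
    have hGnormInt : ∀ n, (∫ t : ℝ, ‖G n t‖) ≤ (|h| ^ n / n !) * B (n + m) := by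
      intro n
      rw [hGeq n]
      calc (∫ t : ℝ, ‖c n • F a (n + m) t‖) = ∫ t : ℝ, ‖c n‖ * ‖F a (n + m) t‖ := by
            simp [norm_smul]
        _ = ‖c n‖ * ∫ t : ℝ, ‖F a (n + m) t‖ := integral_const_mul _ _
        _ ≤ ‖c n‖ * B (n + m) :=
            mul_le_mul_of_nonneg_left (hFnormInt a (n + m)) (norm_nonneg _)
        _ = (|h| ^ n / n !) * B (n + m) := by rw [hcnorm]
    set K : ℝ := C * 2 * (m ! : ℝ) * 2 ^ m / δ ^ (m + 1) with hK
    have hbound : ∀ n, (|h| ^ n / n !) * B (n + m) ≤ K * (2 / 3) ^ n := by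
      intro n
      have hfac : (((n + m)! : ℕ) : ℝ) ≤ 2 ^ (n + m) * (n ! : ℝ) * (m ! : ℝ) := by
        have h1 : (n + m).choose m ≤ 2 ^ (n + m) := by
          have h2 := Finset.single_le_sum (f := fun i => (n + m).choose i)
            (fun i _ => Nat.zero_le _) (Finset.mem_range.mpr (show m < n + m + 1 by omega))
          rwa [Nat.sum_range_choose] at h2
        have h3 := Nat.add_choose_mul_factorial_mul_factorial n m
        calc (((n + m)! : ℕ) : ℝ) = ((n + m).choose m : ℝ) * (n ! : ℝ) * (m ! : ℝ) := by
              exact_mod_cast h3.symm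
          _ ≤ 2 ^ (n + m) * (n ! : ℝ) * (m ! : ℝ) := by
              gcongr
              exact_mod_cast h1
      have hq : 2 * |h| / δ ≤ 2 / 3 := by
        rw [div_le_div_iff₀ hδ (by norm_num)]
        nlinarith [abs_nonneg h]
      have hBnm : B (n + m) = C * (2 * (((n + m)! : ℝ) / δ ^ (n + m + 1))) := rfl
      have e1 : (|h| ^ n / n !) * B (n + m)
          ≤ (|h| ^ n / n !) * (C * (2 * ((2 ^ (n + m) * (n ! : ℝ) * (m ! : ℝ)) / δ ^ (n + m + 1)))) := by
        rw [hBnm]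
        gcongr
      have e2 : (|h| ^ n / n !) * (C * (2 * ((2 ^ (n + m) * (n ! : ℝ) * (m ! : ℝ)) / δ ^ (n + m + 1))))
          = K * (2 * |h| / δ) ^ n := by
        rw [hK]
        have hn : (n ! : ℝ) ≠ 0 := by positivity
        have hd : (δ : ℝ) ≠ 0 := ne_of_gt hδ
        rw [div_pow, mul_pow]
        field_simp
        ring
      have e3 : K * (2 * |h| / δ) ^ n ≤ K * (2 / 3) ^ n := by
        have hK0 : 0 ≤ K := by rw [hK]; positivity
        gcongr
      calc (|h| ^ n / n !) * B (n + m)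
          ≤ (|h| ^ n / n !) * (C * (2 * ((2 ^ (n + m) * (n ! : ℝ) * (m ! : ℝ)) / δ ^ (n + m + 1)))) := e1
        _ = K * (2 * |h| / δ) ^ n := e2
        _ ≤ K * (2 / 3) ^ n := e3
    have hGsum : Summable (fun n => ∫ t : ℝ, ‖G n t‖) := by
      apply Summable.of_nonneg_of_le (fun n => integral_nonneg (fun t => norm_nonneg _))
        (fun n => (hGnormInt n).trans (hbound n))
      exact (summable_geometric_of_lt_one (by norm_num) (by norm_num)).mul_left K
    have hsum := hasSum_integral_of_summable_integral_norm hGint hGsum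
    have hGzero : (fun n : ℕ => ∫ t : ℝ, G n t) = fun _ => (0 : X) := by
      funext n
      rw [hGeq n, integral_smul]
      have : (∫ t : ℝ, F a (n + m) t) = M a (n + m) := rfl
      rw [this, h0, smul_zero]
    rw [hGzero] at hsum
    have hzero : (∫ t : ℝ, ∑' n, G n t) = 0 := hasSum_zero.unique hsum |>.symm
    have hpt : ∀ t : ℝ, (∑' n, G n t) = F (a + h) m t := by
      intro t
      have hsummable : Summable (fun n : ℕ => ((↑(-(h * t)) * Complex.I) ^ n / n ! : ℂ)) := by
        refine Summable.of_norm ?_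
        refine Summable.congr
          (Real.summable_pow_div_factorial ‖(↑(-(h * t)) * Complex.I : ℂ)‖) (fun n => ?_)
        rw [norm_div, norm_pow, Complex.norm_natCast]
      calc (∑' n, G n t)
          = ∑' n : ℕ, ((↑(-(h * t)) * Complex.I) ^ n / n ! : ℂ) • F a m t := rfl
        _ = (∑' n : ℕ, ((↑(-(h * t)) * Complex.I) ^ n / n ! : ℂ)) • F a m t :=
            hsummable.tsum_smul_const (F a m t)
        _ = Complex.exp (↑(-(h * t)) * Complex.I) • F a m t := by
            rw [Complex.exp_eq_exp_ℂ, NormedSpace.exp_eq_tsum_div]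
        _ = F (a + h) m t := by
            show Complex.exp (↑(-(h * t)) * Complex.I) • ((E a t * (t : ℂ) ^ m) • w t)
              = (E (a + h) t * (t : ℂ) ^ m) • w t
            rw [smul_smul, ← mul_assoc,
              show E a t = Complex.exp (-(↑(a * t)) * Complex.I) from rfl,
              show E (a + h) t = Complex.exp (-(↑((a + h) * t)) * Complex.I) from rfl,
              ← Complex.exp_add]
            congr 2
            push_cast
            ring
    calc M (a + h) m = ∫ t : ℝ, F (a + h) m t := rfl
      _ = ∫ t : ℝ, ∑' n, G n t := (integral_congr_ae (ae_of_all _ hpt)).symm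
      _ = 0 := hzero
  have hmul : ∀ h : ℝ, |h| ≤ δ / 3 → ∀ k : ℕ, ∀ n, M ((k : ℝ) * h) n = 0 := by
    intro h hh k
    induction k with
    | zero => simpa using hM0
    | succ k ih =>
        intro n
        have heq : (((k + 1 : ℕ) : ℝ)) * h = (k : ℝ) * h + h := by push_cast; ring
        rw [heq]
        exact hstep ((k : ℝ) * h) h hh ih n
  have hall : ∀ a : ℝ, ∀ n, M a n = 0 := by
    intro a
    set k : ℕ := ⌈|a| / (δ / 3)⌉₊ + 1 with hk
    have hk0 : (0 : ℝ) < (k : ℝ) := by exact_mod_cast Nat.succ_pos _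
    have h1 : |a / (k : ℝ)| ≤ δ / 3 := by
      rw [abs_div, abs_of_pos hk0, div_le_iff₀ hk0]
      have hle := Nat.le_ceil (|a| / (δ / 3))
      have h2 : (⌈|a| / (δ / 3)⌉₊ : ℝ) ≤ (k : ℝ) := by rw [hk]; push_cast; linarith
      have h3 : |a| / (δ / 3) ≤ (k : ℝ) := le_trans hle h2
      have hd3 : (0:ℝ) < δ / 3 := by linarith
      calc |a| = (|a| / (δ / 3)) * (δ / 3) := by field_simp
        _ ≤ (k : ℝ) * (δ / 3) := by gcongr
        _ = δ / 3 * (k : ℝ) := by ring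
    have h2 : (k : ℝ) * (a / (k : ℝ)) = a := by field_simp
    intro n
    have h3 := hmul (a / (k : ℝ)) h1 k n
    rwa [h2] at h3
  have hFour : ∀ v : ℝ, 𝓕 w v = 0 := by
    intro v
    rw [Real.fourier_real_eq_integral_exp_smul]
    have h1 : ∀ t : ℝ, Complex.exp (↑(-2 * Real.pi * t * v) * Complex.I) • w t
        = F (2 * Real.pi * v) 0 t := by
      intro t
      show Complex.exp (↑(-2 * Real.pi * t * v) * Complex.I) • w t
        = (E (2 * Real.pi * v) t * (t : ℂ) ^ 0) • w t
      rw [pow_zero, mul_one,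
        show E (2 * Real.pi * v) t
          = Complex.exp (-(↑((2 * Real.pi * v) * t)) * Complex.I) from rfl]
      congr 2
      push_cast
      ring
    calc (∫ t : ℝ, Complex.exp (↑(-2 * Real.pi * t * v) * Complex.I) • w t)
        = ∫ t : ℝ, F (2 * Real.pi * v) 0 t := integral_congr_ae (ae_of_all _ h1)
      _ = 0 := hall (2 * Real.pi * v) 0
  have hwInt : Integrable w := by
    apply Integrable.mono' (fInt 0) hw.aestronglyMeasurable (ae_of_all _ ?_)
    intro t
    have h1 : f 0 t = C * Real.exp (-(δ * |t|)) := by rw [hf]; simp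
    rw [h1]
    exact hb t
  have hFwInt : Integrable (𝓕 w) := by
    have h1 : 𝓕 w = fun _ : ℝ => (0 : X) := funext hFour
    rw [h1]
    exact integrable_zero _ _ _
  have hinv := hw.fourierInv_fourier_eq hwInt hFwInt
  intro t
  calc w t = 𝓕⁻ (𝓕 w) t := (congrFun hinv t).symm
    _ = 0 := by
        rw [show 𝓕 w = fun _ : ℝ => (0 : X) from funext hFour,
          Real.fourierInv_eq]
        simp


theorem stmt_8 {X : Type*} [NormedAddCommGroup X] [NormedSpace ℂ X] [CompleteSpace X]
    (u : ℝ → X) (C δ : ℝ) (hC : 0 < C) (hδ : 0 < δ)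
    (hu : ContinuousOn u (Ici 0))
    (hbound : ∀ t : ℝ, 0 ≤ t → ‖u t‖ ≤ C * Real.exp (-δ * t))
    (hmom : ∀ k : ℕ, (∫ t in Ioi (0:ℝ), ((t : ℂ) ^ (2 * k)) • u t) = 0) :
    ∀ t : ℝ, 0 ≤ t → u t = 0 := by
  set w : ℝ → X := fun t => u |t| with hwdef
  have hwcont : Continuous w := by
    rw [← continuousOn_univ]
    exact hu.comp continuous_abs.continuousOn (fun x _ => abs_nonneg x)
  have hwb : ∀ t : ℝ, ‖w t‖ ≤ C * Real.exp (-(δ * |t|)) := by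
    intro t
    have h := hbound |t| (abs_nonneg t)
    rwa [show -δ * |t| = -(δ * |t|) by ring] at h
  have hmm : ∀ n : ℕ, (∫ t : ℝ, ((t : ℂ) ^ n) • w t) = 0 := by
    intro n
    have hInt : Integrable (fun t : ℝ => ((t : ℂ) ^ n) • w t) := by
      apply Integrable.mono'
        (evenInt (g := fun s => C * (s ^ n * Real.exp (-(δ * s)))) ((IoiInt hδ n).const_mul C))
        ((Complex.continuous_ofReal.pow n).smul hwcont).aestronglyMeasurable
        (ae_of_all _ ?_)
      intro t
      have h1 : ‖((t : ℂ) ^ n) • w t‖ = |t| ^ n * ‖w t‖ := by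
        rw [norm_smul]
        simp [map_pow, Complex.norm_real, abs_pow]
      rw [show (Complex.ofReal ^ n • w) t = ((t : ℂ) ^ n) • w t from rfl, h1]
      exact (mul_le_mul_of_nonneg_left (hwb t) (by positivity)).trans_eq (by ring)
    have hIic : (∫ t in Iic (0:ℝ), ((t : ℂ) ^ n) • w t)
        = ∫ t in Ioi (0:ℝ), ((-1 : ℂ) ^ n) • (((t : ℂ) ^ n) • w t) := by
      have h2 := integral_comp_neg_Ioi (0:ℝ) (fun t : ℝ => ((t : ℂ) ^ n) • w t)
      rw [neg_zero] at h2
      rw [← h2]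
      refine setIntegral_congr_fun measurableSet_Ioi (fun x hx => ?_)
      have h3 : w (-x) = w x := by rw [hwdef]; simp
      show (((-x : ℝ) : ℂ) ^ n) • w (-x) = ((-1 : ℂ) ^ n) • (((x : ℂ) ^ n) • w x)
      rw [h3, smul_smul]
      congr 1
      push_cast
      ring
    have hIoi : (∫ t in Ioi (0:ℝ), ((t : ℂ) ^ n) • w t)
        = ∫ t in Ioi (0:ℝ), ((t : ℂ) ^ n) • u t := by
      refine setIntegral_congr_fun measurableSet_Ioi (fun x hx => ?_)
      have h3 : w x = u x := by rw [hwdef]; simp [abs_of_pos (show (0:ℝ) < x from hx)]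
      rw [h3]
    have hsplit := intervalIntegral.integral_Iic_add_Ioi (b := (0:ℝ)) (hInt.integrableOn) (hInt.integrableOn)
    rw [← hsplit, hIic, integral_smul, hIoi]
    rcases Nat.even_or_odd n with he | ho
    · have h1 : (-1 : ℂ) ^ n = 1 := he.neg_one_pow
      obtain ⟨k, hk⟩ := he
      have h2 : (∫ t in Ioi (0:ℝ), ((t : ℂ) ^ n) • u t) = 0 := by
        rw [show n = 2 * k by omega]
        exact hmom k
      rw [h1, one_smul, h2, add_zero]
    · have h1 : (-1 : ℂ) ^ n = -1 := ho.neg_one_pow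
      rw [h1, neg_one_smul, neg_add_cancel]
  have hz := key w C δ hC hδ hwcont hwb hmm
  intro t ht
  have h2 := hz t
  rw [hwdef] at h2
  simpa [abs_of_nonneg ht] using h2
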